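/- arXiv:0806.4052 — 3 statements merged into one kernel-verified Lean document; each statement's English description precedes it below -/
import Mathlib

section
/- Let D be a rotation group on a three-dimensional real vector space V and let v, w be linearly independent. The unique rotation r with r : [v,w] ↦ [w,v] satisfies r² = id, and there exists λ > 0 with r v = λ w and r(λ w) = v. -/
/-- The ray (half-line) spanned by `v`: all nonnegative multiples of `v`. -/
def Ray' {V : Type*} [AddCommGroup V] [Module ℝ V] (v : V) : Set V :=
  {x | ∃ c : ℝ, 0 ≤ c ∧ x = c • v}

/-- The half-plane `ℝ v + ℝ≥0 w`. -/
def HalfPlane {V : Type*} [AddCommGroup V] [Module ℝ V] (v w : V) : Set V :=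
  {x | ∃ a b : ℝ, 0 ≤ b ∧ x = a • v + b • w}

/-- `D` is a rotation group: for any two pairs of (half-plane, ray on its boundary)
there is exactly one element of `D` mapping the first pair to the second. -/
def IsRotationGroup {V : Type*} [AddCommGroup V] [Module ℝ V]
    (D : Subgroup (V ≃ₗ[ℝ] V)) : Prop :=
  ∀ v w v' w' : V, LinearIndependent ℝ ![v, w] → LinearIndependent ℝ ![v', w'] →
    ∃! d : V ≃ₗ[ℝ] V, d ∈ D ∧
      (d : V ≃ₗ[ℝ] V) '' HalfPlane v w = HalfPlane v' w' ∧
      (d : V ≃ₗ[ℝ] V) '' Ray' v = Ray' v'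

/-- `w ⊥ v` : some rotation sends `w` to `-w` and fixes `v`. -/
def Perp {V : Type*} [AddCommGroup V] [Module ℝ V]
    (D : Subgroup (V ≃ₗ[ℝ] V)) (w v : V) : Prop :=
  ∃ r ∈ D, r w = -w ∧ r v = v

section helper
variable {V : Type*} [AddCommGroup V] [Module ℝ V]

lemma image_halfPlane (d : V ≃ₗ[ℝ] V) (x y : V) :
    ⇑d '' HalfPlane x y = HalfPlane (d x) (d y) := by
  ext z
  constructor
  · rintro ⟨u, ⟨a, b, hb, rfl⟩, rfl⟩
    exact ⟨a, b, hb, by simp [map_add, map_smul]⟩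
  · rintro ⟨a, b, hb, rfl⟩
    exact ⟨a • x + b • y, ⟨a, b, hb, rfl⟩, by simp [map_add, map_smul]⟩

lemma image_ray (d : V ≃ₗ[ℝ] V) (x : V) :
    ⇑d '' Ray' x = Ray' (d x) := by
  ext z
  constructor
  · rintro ⟨u, ⟨c, hc, rfl⟩, rfl⟩
    exact ⟨c, hc, by simp [map_smul]⟩
  · rintro ⟨c, hc, rfl⟩
    exact ⟨c • x, ⟨c, hc, rfl⟩, by simp [map_smul]⟩

lemma ray_smul {c : ℝ} (hc : 0 < c) (x : V) : Ray' (c • x) = Ray' x := by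
  ext z
  constructor
  · rintro ⟨t, ht, rfl⟩
    exact ⟨t * c, by positivity, by rw [smul_smul]⟩
  · rintro ⟨t, ht, rfl⟩
    exact ⟨t / c, by positivity, by rw [smul_smul]; congr 1; field_simp⟩

lemma halfPlane_smul_left {c : ℝ} (hc : c ≠ 0) (x y : V) :
    HalfPlane (c • x) y = HalfPlane x y := by
  ext z
  constructor
  · rintro ⟨a, b, hb, rfl⟩
    exact ⟨a * c, b, hb, by rw [smul_smul]⟩
  · rintro ⟨a, b, hb, rfl⟩
    exact ⟨a / c, b, hb, by rw [smul_smul]; congr 2; field_simp⟩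

lemma halfPlane_shear {β : ℝ} (hβ : 0 < β) (α : ℝ) (x y : V) :
    HalfPlane x (α • x + β • y) = HalfPlane x y := by
  ext z
  constructor
  · rintro ⟨a, b, hb, rfl⟩
    exact ⟨a + b * α, b * β, by positivity, by module⟩
  · rintro ⟨a, b, hb, rfl⟩
    refine ⟨a - b / β * α, b / β, by positivity, ?_⟩
    match_scalars <;> field_simp <;> ring

end helper

theorem stmt2 {V : Type*} [AddCommGroup V] [Module ℝ V]
    (hdim : Module.finrank ℝ V = 3)
    (D : Subgroup (V ≃ₗ[ℝ] V)) (hD : IsRotationGroup D)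
    (v w : V) (hvw : LinearIndependent ℝ ![v, w])
    (r : V ≃ₗ[ℝ] V) (hr : r ∈ D)
    (hH : (r : V ≃ₗ[ℝ] V) '' HalfPlane v w = HalfPlane w v)
    (hR : (r : V ≃ₗ[ℝ] V) '' Ray' v = Ray' w) :
    r ^ 2 = 1 ∧ ∃ l : ℝ, 0 < l ∧ r v = l • w ∧ r (l • w) = v := by
  have hpair : ∀ s t : ℝ, s • v + t • w = 0 → s = 0 ∧ t = 0 :=
    LinearIndependent.pair_iff.mp hvw
  have hw0 : w ≠ 0 := by
    intro h
    have := (hpair 0 1 (by simp [h])).2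
    norm_num at this
  -- r v = l • w with l > 0
  obtain ⟨l, hl0, hrv⟩ : ∃ l : ℝ, 0 ≤ l ∧ r v = l • w := by
    have : r v ∈ Ray' w := by
      rw [← hR]; exact ⟨v, ⟨1, by norm_num, (one_smul ℝ v).symm⟩, rfl⟩
    obtain ⟨c, hc, h⟩ := this
    exact ⟨c, hc, h⟩
  have hlpos : 0 < l := by
    rcases hl0.lt_or_eq with h | h
    · exact h
    · exfalso
      have hw : w ∈ Ray' w := ⟨1, by norm_num, (one_smul ℝ w).symm⟩
      rw [← hR] at hw
      obtain ⟨u, ⟨c, hc, rfl⟩, hu⟩ := hw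
      rw [map_smul, hrv, ← h] at hu
      simp at hu
      exact hw0 hu.symm
  -- r w = a • w + b • v with b > 0
  have hH' : HalfPlane (r v) (r w) = HalfPlane w v := by rw [← image_halfPlane, hH]
  obtain ⟨a, b, hb0, hrw⟩ : ∃ a b : ℝ, 0 ≤ b ∧ r w = a • w + b • v := by
    have : r w ∈ HalfPlane w v := by
      rw [← hH']; exact ⟨0, 1, by norm_num, by simp⟩
    obtain ⟨a, b, hb, h⟩ := this
    exact ⟨a, b, hb, h⟩
  have hbpos : 0 < b := by
    rcases hb0.lt_or_eq with h | h
    · exact h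
    · exfalso
      have hv : v ∈ HalfPlane (r v) (r w) := by
        rw [hH']; exact ⟨0, 1, by norm_num, by simp⟩
      obtain ⟨p, q, hq, hv⟩ := hv
      rw [hrv, hrw] at hv
      have key : (q * b - 1) • v + (p * l + q * a) • w = 0 := by
        have : (q * b - 1) • v + (p * l + q * a) • w
            = (p • (l • w) + q • (a • w + b • v)) - v := by module
        rw [this, ← hv, sub_self]
      have := (hpair _ _ key).1
      rw [← h] at this
      norm_num at this
  -- the positive eigenvalue and eigenvector of r in the plane
  set sq : ℝ := Real.sqrt (a ^ 2 + 4 * l * b) with hsq_def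
  have hs2 : sq ^ 2 = a ^ 2 + 4 * l * b := Real.sq_sqrt (by positivity)
  have habs : |a| < sq := by
    have : Real.sqrt (a ^ 2) < sq := by
      apply Real.sqrt_lt_sqrt (by positivity)
      nlinarith
    rwa [Real.sqrt_sq_eq_abs] at this
  have hags : a < sq := lt_of_le_of_lt (le_abs_self a) habs
  set lam : ℝ := (a + sq) / 2 with hlam_def
  have hlam_pos : 0 < lam := by
    have h2 := neg_abs_le a
    simp only [hlam_def]
    nlinarith
  have hlam_ne : lam ≠ 0 := ne_of_gt hlam_pos
  have hlamsq : lam ^ 2 = a * lam + l * b := by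
    simp only [hlam_def]
    nlinarith [hs2]
  set x : ℝ := b / lam with hx_def
  have hx_pos : 0 < x := by positivity
  set m : V := x • v + w with hm_def
  have hrm : r m = lam • m := by
    have h1 : r m = b • v + (x * l + a) • w := by
      rw [hm_def, map_add, map_smul, hrv, hrw]
      module
    rw [h1, hm_def]
    have e1 : lam * x = b := by rw [hx_def]; field_simp
    have e2 : x * l + a = lam := by
      rw [hx_def]; field_simp; nlinarith [hlamsq]
    rw [smul_add, smul_smul, e1, e2]
  -- m, v are linearly independent
  have hmv : LinearIndependent ℝ ![m, v] := by
    rw [LinearIndependent.pair_iff]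
    intro p q hpq
    have key : (p * x + q) • v + p • w = 0 := by
      have : (p * x + q) • v + p • w = p • m + q • v := by rw [hm_def]; module
      rw [this, hpq]
    obtain ⟨h1, h2⟩ := hpair _ _ key
    constructor
    · exact h2
    · rw [h2] at h1; simpa using h1
  -- r^2 fixes the flag (HalfPlane m v, Ray' m), hence equals 1
  obtain ⟨d, -, hdu⟩ := hD m v m v hmv hmv
  have hco : ⇑(r ^ 2) = ⇑r ∘ ⇑r := by
    ext z; rw [pow_two]; rfl
  have hrrm : r (r m) = (lam * lam) • m := by
    rw [hrm, map_smul, hrm, smul_smul]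
  have h1mem : (1 : V ≃ₗ[ℝ] V) ∈ D := one_mem D
  have hone : ⇑(1 : V ≃ₗ[ℝ] V) = id := rfl
  have hbeta : 0 < l * b - l * a * x := by
    rw [hx_def]
    rw [show l * b - l * a * (b / lam) = l * b * ((lam - a) / lam) by field_simp]
    have : 0 < (lam - a) / lam := by
      apply div_pos _ hlam_pos
      nlinarith
    positivity
  have hr2H : ⇑(r ^ 2) '' HalfPlane m v = HalfPlane m v := by
    rw [hco, Set.image_comp, image_halfPlane, image_halfPlane, hrrm]
    rw [halfPlane_smul_left (by positivity : lam * lam ≠ 0)]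
    have harg : r (r v) = (l * a) • m + (l * b - l * a * x) • v := by
      rw [hrv, map_smul, hrw, hm_def]
      module
    rw [harg, halfPlane_shear hbeta]
  have hr2R : ⇑(r ^ 2) '' Ray' m = Ray' m := by
    rw [hco, Set.image_comp, image_ray, image_ray, hrrm, ray_smul (by positivity)]
  have hr2eq : r ^ 2 = 1 := by
    have hA := hdu (r ^ 2) ⟨pow_mem hr 2, hr2H, hr2R⟩
    have hB := hdu 1 ⟨h1mem, by rw [hone, Set.image_id], by rw [hone, Set.image_id]⟩
    rw [hA, hB]
  refine ⟨hr2eq, l, hlpos, hrv, ?_⟩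
  have : r (r v) = v := by
    have := congrArg (fun e : V ≃ₗ[ℝ] V => e v) hr2eq
    simpa [pow_two] using this
  rwa [hrv] at this
end

section
/- For any nonzero vector v and any vector w in a three-dimensional real vector space with rotation group D, there is exactly one real number α_v(w) such that r_v w + w = α_v(w) · v, and the map w ↦ α_v(w) is a linear form on V taking the value 2 on v and the value 0 on every vector perpendicular to v. -/
lemma image_halfplane {V : Type*} [AddCommGroup V] [Module ℝ V] (d : V ≃ₗ[ℝ] V)
    (v w v' w' : V) (p q r : ℝ) (hp : 0 < p) (hr : 0 < r)
    (hdv : d v = p • v') (hdw : d w = q • v' + r • w') :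
    ⇑d '' HalfPlane v w = HalfPlane v' w' := by
  ext x
  constructor
  · rintro ⟨y, ⟨a, b, hb, rfl⟩, rfl⟩
    refine ⟨a * p + b * q, b * r, by positivity, ?_⟩
    rw [map_add, map_smul, map_smul, hdv, hdw]
    module
  · rintro ⟨a, b, hb, rfl⟩
    refine ⟨((a - (b / r) * q) / p) • v + (b / r) • w, ⟨_, b / r, by positivity, rfl⟩, ?_⟩
    rw [map_add, map_smul, map_smul, hdv, hdw]
    match_scalars <;> field_simp <;> ring

lemma image_ray_s10 {V : Type*} [AddCommGroup V] [Module ℝ V] (d : V ≃ₗ[ℝ] V)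
    (v v' : V) (p : ℝ) (hp : 0 < p) (hdv : d v = p • v') :
    ⇑d '' Ray' v = Ray' v' := by
  ext x
  constructor
  · rintro ⟨y, ⟨c, hc, rfl⟩, rfl⟩
    exact ⟨c * p, by positivity, by rw [map_smul, hdv]; module⟩
  · rintro ⟨c, hc, rfl⟩
    refine ⟨(c / p) • v, ⟨c / p, by positivity, rfl⟩, ?_⟩
    rw [map_smul, hdv]
    match_scalars <;> field_simp

/-- Every vector independent from `v` gives rise to a vector perpendicular to `v`
spanning `span {v, w}` together with `v`. -/
lemma exists_perp {V : Type*} [AddCommGroup V] [Module ℝ V]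
    (D : Subgroup (V ≃ₗ[ℝ] V)) (hD : IsRotationGroup D)
    (v : V) (hv : v ≠ 0) (w : V) (hind : LinearIndependent ℝ ![v, w]) :
    ∃ a : ℝ, Perp D (w - (a / 2) • v) v := by
  have hind' : LinearIndependent ℝ ![v, -w] := by
    rw [LinearIndependent.pair_iff] at hind ⊢
    intro s t hst
    have := hind s (-t) (by rw [← hst]; module)
    exact ⟨this.1, by linarith [this.2]⟩
  obtain ⟨d, ⟨hdD, hdH, hdR⟩, _⟩ := hD v w v (-w) hind hind'
  -- d v = c • v with c > 0
  have hvmem : d v ∈ Ray' v := by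
    rw [← hdR]; exact ⟨v, ⟨1, zero_le_one, (one_smul ℝ v).symm⟩, rfl⟩
  obtain ⟨c, hc0, hdv⟩ := hvmem
  have hc : 0 < c := by
    rcases hc0.lt_or_eq with h | h
    · exact h
    · exfalso; apply hv
      have : d v = 0 := by rw [hdv, ← h, zero_smul]
      exact (LinearEquiv.map_eq_zero_iff d).mp this
  -- d w = a • v - b • w with b > 0
  have hwmem : d w ∈ HalfPlane v (-w) := by
    rw [← hdH]; exact ⟨w, ⟨0, 1, zero_le_one, by module⟩, rfl⟩
  obtain ⟨a, b, hb0, hdw⟩ := hwmem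
  have hb : 0 < b := by
    rcases hb0.lt_or_eq with h | h
    · exact h
    · exfalso
      have hw : w = (a / c) • v := by
        apply d.injective
        rw [hdw, ← h, map_smul, hdv]
        match_scalars <;> field_simp <;> simp
      exact ((LinearIndependent.pair_iff' hv).mp hind (a / c)) hw.symm
  have hdw' : d w = a • v + (-b) • w := by rw [hdw]; module
  -- d * d fixes the pair, so d * d = 1
  obtain ⟨e, _, huniq⟩ := hD v w v w hind hind
  have hddv : (d * d) v = (c * c) • v := by
    show d (d v) = _
    rw [hdv, map_smul, hdv, smul_smul]
  have hddw : (d * d) w = (a * c - b * a) • v + (b * b) • w := by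
    show d (d w) = _
    rw [hdw', map_add, map_smul, map_smul, hdv, hdw']
    module
  have h1 : d * d = (1 : V ≃ₗ[ℝ] V) := by
    have e1 : d * d = e := huniq (d * d) ⟨mul_mem hdD hdD,
      image_halfplane (d * d) v w v w (c * c) (a * c - b * a) (b * b)
        (by positivity) (by positivity) hddv hddw,
      image_ray_s10 (d * d) v v (c * c) (by positivity) hddv⟩
    have e2 : (1 : V ≃ₗ[ℝ] V) = e := huniq 1 ⟨one_mem D,
      image_halfplane 1 v w v w 1 0 1 one_pos one_pos (by simp) (by simp),
      image_ray_s10 1 v v 1 one_pos (by simp)⟩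
    rw [e1, e2]
  -- hence c = 1 and b = 1
  have hc1 : c = 1 := by
    have : (c * c) • v = v := by rw [← hddv, h1]; rfl
    have hcc : c * c = 1 := by
      by_contra h
      exact hv (by
        have : (c * c - 1) • v = 0 := by rw [sub_smul, this, one_smul, sub_self]
        exact (smul_eq_zero.mp this).resolve_left (sub_ne_zero.mpr h))
    nlinarith
  have hb1 : b = 1 := by
    have hw' : (a * c - b * a) • v + (b * b) • w = w := by rw [← hddw, h1]; rfl
    have : (a * c - b * a) • v + (b * b - 1) • w = 0 := by
      calc (a * c - b * a) • v + (b * b - 1) • w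
          = ((a * c - b * a) • v + (b * b) • w) - w := by module
        _ = 0 := by rw [hw', sub_self]
    have := (LinearIndependent.pair_iff.mp hind) _ _ this
    nlinarith [this.2]
  -- so d v = v, d w = a • v - w, and u := w - (a/2) v is flipped by d
  refine ⟨a, d, hdD, ?_, by rw [hdv, hc1, one_smul]⟩
  rw [map_sub, map_smul, hdw', hdv, hc1, hb1]
  module

theorem stmt10 {V : Type*} [AddCommGroup V] [Module ℝ V]
    (hdim : Module.finrank ℝ V = 3)
    (D : Subgroup (V ≃ₗ[ℝ] V)) (hD : IsRotationGroup D)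
    (v : V) (hv : v ≠ 0)
    (rv : V ≃ₗ[ℝ] V) (hrvD : rv ∈ D) (hrv1 : rv v = v)
    (hrv2 : ∀ u : V, Perp D u v → rv u = -u) :
    (∀ w : V, ∃! a : ℝ, rv w + w = a • v) ∧
    (∃ α : V →ₗ[ℝ] ℝ, (∀ w : V, rv w + w = α w • v) ∧ α v = 2 ∧
      ∀ u : V, Perp D u v → α u = 0) := by
  have key : ∀ w : V, ∃ a : ℝ, rv w + w = a • v := by
    intro w
    by_cases hind : LinearIndependent ℝ ![v, w]
    · obtain ⟨a, hperp⟩ := exists_perp D hD v hv w hind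
      have hu := hrv2 _ hperp
      refine ⟨a, ?_⟩
      have : rv w = rv (w - (a / 2) • v) + (a / 2) • rv v := by
        rw [← map_smul, ← map_add]; congr 1; module
      rw [this, hu, hrv1]
      module
    · rw [LinearIndependent.pair_iff' hv] at hind
      push_neg at hind
      obtain ⟨k, hk⟩ := hind
      refine ⟨2 * k, ?_⟩
      rw [← hk, map_smul, hrv1]
      module
  have uniq : ∀ w : V, ∃! a : ℝ, rv w + w = a • v := by
    intro w
    obtain ⟨a, ha⟩ := key w
    refine ⟨a, ha, fun b hb => ?_⟩
    by_contra h
    apply hv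
    have : (b - a) • v = 0 := by rw [sub_smul, ← ha, ← hb, sub_self]
    exact (smul_eq_zero.mp this).resolve_left (sub_ne_zero.mpr h)
  refine ⟨uniq, ?_⟩
  choose f hf using key
  have fadd : ∀ x y : V, f (x + y) = f x + f y := by
    intro x y
    have h1 : rv (x + y) + (x + y) = (f x + f y) • v := by
      rw [map_add, add_smul, ← hf x, ← hf y]; module
    exact (uniq (x + y)).unique (hf (x + y)) h1
  have fsmul : ∀ (c : ℝ) (x : V), f (c • x) = c * f x := by
    intro c x
    have h1 : rv (c • x) + c • x = (c * f x) • v := by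
      rw [map_smul, mul_smul, ← smul_add, ← hf x]
    exact (uniq (c • x)).unique (hf (c • x)) h1
  refine ⟨⟨⟨f, fadd⟩, fsmul⟩, hf, ?_, ?_⟩
  · have : rv v + v = (2 : ℝ) • v := by rw [hrv1]; module
    exact (uniq v).unique (hf v) this
  · intro u hu
    have : rv u + u = (0 : ℝ) • v := by rw [hrv2 u hu]; module
    exact (uniq u).unique (hf u) this
end

section
/- For every inner product b on a three-dimensional real vector space V, the special orthogonal group SO(V; b) = {d ∈ GL(V) : b(dv, dw) = b(v,w) for all v, w, and det d = 1} is a rotation group: for any two pairs consisting of a half-plane and a ray on its boundary, there is exactly one element of SO(V; b) mapping one pair to the other. -/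
open Module
open scoped InnerProductSpace

section DetHelpers
variable {V : Type*} [AddCommGroup V] [Module ℝ V]

lemma det_eq_basis_det (B : Basis (Fin 3) ℝ V) (d : V →ₗ[ℝ] V) (g : Fin 3 → V)
    (hg : ∀ i, d (B i) = g i) : LinearMap.det d = B.det g := by
  rw [← LinearMap.det_toMatrix B, Basis.det_apply]
  congr 1
  ext i j
  rw [LinearMap.toMatrix_apply, Basis.toMatrix_apply, hg]

lemma det_scale3 (B : Basis (Fin 3) ℝ V) (g : Fin 3 → V) (t : ℝ) :
    B.det ![g 0, g 1, t • g 2] = t * B.det g := by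
  have h1 : ![g 0, g 1, t • g 2] = Function.update g 2 (t • g 2) := by
    funext i
    fin_cases i <;> simp [Function.update]
  rw [h1, AlternatingMap.map_update_smul, Function.update_eq_self, smul_eq_mul]

end DetHelpers

section SetLemmas
variable {V : Type*} [AddCommGroup V] [Module ℝ V]

lemma image_Ray (d : V ≃ₗ[ℝ] V) (v : V) : ⇑d '' Ray' v = Ray' (d v) := by
  ext x
  constructor
  · rintro ⟨y, ⟨c, hc, rfl⟩, rfl⟩
    exact ⟨c, hc, by simp⟩
  · rintro ⟨c, hc, rfl⟩
    exact ⟨c • v, ⟨c, hc, rfl⟩, by simp⟩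

lemma image_HalfPlane (d : V ≃ₗ[ℝ] V) (v w : V) :
    ⇑d '' HalfPlane v w = HalfPlane (d v) (d w) := by
  ext x
  constructor
  · rintro ⟨y, ⟨p, q, hq, rfl⟩, rfl⟩
    exact ⟨p, q, hq, by simp⟩
  · rintro ⟨p, q, hq, rfl⟩
    exact ⟨p • v + q • w, ⟨p, q, hq, rfl⟩, by simp⟩

lemma Ray'_smul {c : ℝ} (hc : 0 < c) (v : V) : Ray' (c • v) = Ray' v := by
  ext x
  constructor
  · rintro ⟨t, ht, rfl⟩
    exact ⟨t * c, by positivity, by rw [smul_smul]⟩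
  · rintro ⟨t, ht, rfl⟩
    refine ⟨t / c, by positivity, ?_⟩
    rw [smul_smul, div_mul_cancel₀ _ hc.ne']

lemma HalfPlane_smul_left {c : ℝ} (hc : c ≠ 0) (v w : V) :
    HalfPlane (c • v) w = HalfPlane v w := by
  ext x
  constructor
  · rintro ⟨p, q, hq, rfl⟩
    exact ⟨p * c, q, hq, by rw [smul_smul]⟩
  · rintro ⟨p, q, hq, rfl⟩
    exact ⟨p / c, q, hq, by rw [smul_smul, div_mul_cancel₀ _ hc]⟩

lemma HalfPlane_snd (a : ℝ) {s : ℝ} (hs : 0 < s) (v w : V) :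
    HalfPlane v (a • v + s • w) = HalfPlane v w := by
  ext x
  constructor
  · rintro ⟨p, q, hq, rfl⟩
    exact ⟨p + q * a, q * s, by positivity, by module⟩
  · rintro ⟨p, q, hq, rfl⟩
    refine ⟨p - q / s * a, q / s, by positivity, ?_⟩
    match_scalars <;> field_simp <;> ring

end SetLemmas

section GS
variable {V : Type*} [NormedAddCommGroup V] [InnerProductSpace ℝ V]

lemma gs (hdim : Module.finrank ℝ V = 3) {v w : V} (h : LinearIndependent ℝ ![v, w]) :
    ∃ (e : Fin 3 → V) (c a s : ℝ), Orthonormal ℝ e ∧ 0 < c ∧ 0 < s ∧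
      e 0 = c • v ∧ e 1 = a • v + s • w := by
  haveI : FiniteDimensional ℝ V := .of_finrank_eq_succ hdim
  have hv : v ≠ 0 := by have := h.ne_zero 0; simpa using this
  obtain ⟨hw0, hvw⟩ := linearIndependent_fin2.mp h
  simp only [Matrix.cons_val_one, Matrix.head_cons, Matrix.cons_val_zero] at hw0 hvw
  have hv0 : (0:ℝ) < ‖v‖ := norm_pos_iff.mpr hv
  set e1 : V := ‖v‖⁻¹ • v with he1def
  have he1norm : ‖e1‖ = 1 := norm_smul_inv_norm hv
  have he1e1 : ⟪e1, e1⟫_ℝ = 1 := by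
    rw [real_inner_self_eq_norm_mul_norm, he1norm]; ring
  set u : V := w - ⟪e1, w⟫_ℝ • e1 with hudef
  have hu : u ≠ 0 := by
    intro h0
    have h1 := sub_eq_zero.mp h0
    have hw : w = (⟪e1, w⟫_ℝ * ‖v‖⁻¹) • v := by
      conv_lhs => rw [h1]
      rw [he1def, smul_smul]
    set r := ⟪e1, w⟫_ℝ * ‖v‖⁻¹ with hrdef
    have hr : r ≠ 0 := fun h => hw0 (by rw [hw, h, zero_smul])
    exact hvw r⁻¹ (by rw [hw, smul_smul, inv_mul_cancel₀ hr, one_smul])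
  have hu0 : (0:ℝ) < ‖u‖ := norm_pos_iff.mpr hu
  have he1u : ⟪e1, u⟫_ℝ = 0 := by
    simp [hudef, inner_sub_right, real_inner_smul_right, he1e1, he1norm]
  set e2 : V := ‖u‖⁻¹ • u with he2def
  have he2norm : ‖e2‖ = 1 := norm_smul_inv_norm hu
  have h12 : ⟪e1, e2⟫_ℝ = 0 := by
    rw [he2def, real_inner_smul_right, he1u, mul_zero]
  have he2eq : e2 = (-(‖u‖⁻¹ * (⟪e1, w⟫_ℝ * ‖v‖⁻¹))) • v + ‖u‖⁻¹ • w := by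
    rw [he2def, hudef, he1def]
    module
  -- third vector
  set K : Submodule ℝ V := Submodule.span ℝ (Set.range ![e1, e2]) with hKdef
  have hKtop : K ≠ ⊤ := by
    intro htop
    have h2 := finrank_le_of_span_eq_top htop
    rw [hdim] at h2
    simp at h2
  have hbot : Kᗮ ≠ ⊥ := fun hb => hKtop (Submodule.orthogonal_eq_bot_iff.mp hb)
  obtain ⟨x', hx'K, hx'0⟩ := Submodule.exists_mem_ne_zero_of_ne_bot hbot
  set e3 : V := ‖x'‖⁻¹ • x' with he3def
  have he3norm : ‖e3‖ = 1 := norm_smul_inv_norm hx'0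
  have h13 : ⟪e1, e3⟫_ℝ = 0 := by
    have h1K : e1 ∈ K := Submodule.subset_span ⟨0, rfl⟩
    have h0 := (Submodule.mem_orthogonal _ _).mp hx'K e1 h1K
    rw [he3def, real_inner_smul_right, h0, mul_zero]
  have h23 : ⟪e2, e3⟫_ℝ = 0 := by
    have h2K : e2 ∈ K := Submodule.subset_span ⟨1, rfl⟩
    have h0 := (Submodule.mem_orthogonal _ _).mp hx'K e2 h2K
    rw [he3def, real_inner_smul_right, h0, mul_zero]
  have he2e2 : ⟪e2, e2⟫_ℝ = 1 := by
    rw [real_inner_self_eq_norm_mul_norm, he2norm]; ring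
  have he3e3 : ⟪e3, e3⟫_ℝ = 1 := by
    rw [real_inner_self_eq_norm_mul_norm, he3norm]; ring
  refine ⟨![e1, e2, e3], ‖v‖⁻¹, -(‖u‖⁻¹ * (⟪e1, w⟫_ℝ * ‖v‖⁻¹)), ‖u‖⁻¹, ?_, by positivity,
    by positivity, by simp [he1def], by simpa using he2eq⟩
  rw [orthonormal_iff_ite]
  intro i j
  fin_cases i <;> fin_cases j <;>
    simp [he1e1, he2e2, he3e3, h12, h13, h23, real_inner_comm e1 e2,
      real_inner_comm e1 e3, real_inner_comm e2 e3, he1norm, he2norm, he3norm]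

end GS

section Key
variable {V : Type*} [NormedAddCommGroup V] [InnerProductSpace ℝ V]

lemma key (hdim : Module.finrank ℝ V = 3) (v w v' w' : V)
    (h : LinearIndependent ℝ ![v, w]) (h' : LinearIndependent ℝ ![v', w']) :
    ∃! d : V ≃ₗ[ℝ] V,
      ((∀ x y : V, ⟪d x, d y⟫_ℝ = ⟪x, y⟫_ℝ) ∧ LinearMap.det (d : V →ₗ[ℝ] V) = 1) ∧
      ⇑d '' HalfPlane v w = HalfPlane v' w' ∧ ⇑d '' Ray' v = Ray' v' := by
  haveI : FiniteDimensional ℝ V := .of_finrank_eq_succ hdim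
  obtain ⟨e, c, a, s, he, hc, hs, he0, he1⟩ := gs hdim h
  obtain ⟨f, c', a', s', hf, hc', hs', hf0, hf1⟩ := gs hdim h'
  have hcard : Fintype.card (Fin 3) = finrank ℝ V := by simp [hdim]
  let B : Basis (Fin 3) ℝ V := basisOfLinearIndependentOfCardEqFinrank he.linearIndependent hcard
  have hB : ⇑B = e := coe_basisOfLinearIndependentOfCardEqFinrank _ _
  let Bf : Basis (Fin 3) ℝ V := basisOfLinearIndependentOfCardEqFinrank hf.linearIndependent hcard
  have hBf : ⇑Bf = f := coe_basisOfLinearIndependentOfCardEqFinrank _ _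
  have hBo : Orthonormal ℝ ⇑B := hB ▸ he
  have hBfo : Orthonormal ℝ ⇑Bf := hBf ▸ hf
  -- inner product values among the f i
  have F00 : ⟪f 0, f 0⟫_ℝ = 1 := by rw [real_inner_self_eq_norm_mul_norm, hf.1 0]; ring
  have F11 : ⟪f 1, f 1⟫_ℝ = 1 := by rw [real_inner_self_eq_norm_mul_norm, hf.1 1]; ring
  have F22 : ⟪f 2, f 2⟫_ℝ = 1 := by rw [real_inner_self_eq_norm_mul_norm, hf.1 2]; ring
  have F01 : ⟪f 0, f 1⟫_ℝ = 0 := hf.2 (by decide)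
  have F02 : ⟪f 0, f 2⟫_ℝ = 0 := hf.2 (by decide)
  have F12 : ⟪f 1, f 2⟫_ℝ = 0 := hf.2 (by decide)
  have F10 : ⟪f 1, f 0⟫_ℝ = 0 := by rw [real_inner_comm]; exact F01
  have F20 : ⟪f 2, f 0⟫_ℝ = 0 := by rw [real_inner_comm]; exact F02
  have F21 : ⟪f 2, f 1⟫_ℝ = 0 := by rw [real_inner_comm]; exact F12
  -- the sign
  set δ : ℝ := B.det f with hδdef
  have hδ : δ = 1 ∨ δ = -1 := by
    have h1 := OrthonormalBasis.det_to_matrix_orthonormalBasis_real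
      (B.toOrthonormalBasis hBo) (Bf.toOrthonormalBasis hBfo)
    rwa [Basis.toBasis_toOrthonormalBasis, Basis.coe_toOrthonormalBasis, hBf] at h1
  have hδδ : δ * δ = 1 := by rcases hδ with h1 | h1 <;> rw [h1] <;> norm_num
  set f' : Fin 3 → V := ![f 0, f 1, δ • f 2] with hf'def
  have Fij : ∀ i j : Fin 3, ⟪f i, f j⟫_ℝ = if i = j then 1 else 0 := orthonormal_iff_ite.mp hf
  have hf'o : Orthonormal ℝ f' := by
    rw [orthonormal_iff_ite]
    intro i j
    fin_cases i <;> fin_cases j <;>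
      simp [hf'def, real_inner_smul_left, real_inner_smul_right, F00, F11, F22, F01, F02, F12,
        F10, F20, F21, hδδ, norm_smul, hf.1 0, hf.1 1, hf.1 2,
        show |δ| = 1 from by rcases hδ with h1 | h1 <;> simp [h1]]
  let B' : Basis (Fin 3) ℝ V := basisOfLinearIndependentOfCardEqFinrank hf'o.linearIndependent hcard
  have hB' : ⇑B' = f' := coe_basisOfLinearIndependentOfCardEqFinrank _ _
  have hB'o : Orthonormal ℝ ⇑B' := hB' ▸ hf'o
  set d : V ≃ₗ[ℝ] V := B.equiv B' (Equiv.refl (Fin 3)) with hddef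
  have hdiso : ∀ x y : V, ⟪d x, d y⟫_ℝ = ⟪x, y⟫_ℝ := by
    intro x y
    exact (hBo.equiv hB'o (Equiv.refl (Fin 3))).inner_map_map x y
  have hdB : ∀ i, ((d : V →ₗ[ℝ] V) (B i)) = f' i := by
    intro i
    show d (B i) = f' i
    rw [hddef, Basis.equiv_apply, Equiv.refl_apply, hB']
  have hdet1 : LinearMap.det (d : V →ₗ[ℝ] V) = 1 := by
    rw [det_eq_basis_det B _ _ hdB, hf'def, det_scale3, ← hδdef]
    exact hδδ
  have hde0 : d (e 0) = f 0 := by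
    rw [← hB]
    have := hdB 0
    rw [hf'def] at this
    simpa using this
  have hde1 : d (e 1) = f 1 := by
    rw [← hB]
    have := hdB 1
    rw [hf'def] at this
    simpa using this
  have hdv : d v = (c⁻¹ * c') • v' := by
    have hv_eq : v = c⁻¹ • e 0 := by
      rw [he0, smul_smul, inv_mul_cancel₀ hc.ne', one_smul]
    rw [hv_eq, map_smul, hde0, hf0, smul_smul]
  have hw_eq : w = s⁻¹ • e 1 - (s⁻¹ * a) • v := by
    rw [he1]
    match_scalars <;> field_simp <;> ring
  have hdw : d w = (s⁻¹ * a' - s⁻¹ * a * (c⁻¹ * c')) • v' + (s⁻¹ * s') • w' := by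
    rw [hw_eq, map_sub, map_smul, map_smul, hde1, hf1, hdv]
    module
  have hray : ⇑d '' Ray' v = Ray' v' := by
    rw [image_Ray, hdv, Ray'_smul (by positivity)]
  have hhp : ⇑d '' HalfPlane v w = HalfPlane v' w' := by
    rw [image_HalfPlane, hdv, hdw,
      HalfPlane_smul_left (show c⁻¹ * c' ≠ 0 by positivity),
      HalfPlane_snd _ (show (0:ℝ) < s⁻¹ * s' by positivity)]
  refine ⟨d, ⟨⟨hdiso, hdet1⟩, hhp, hray⟩, ?_⟩
  rintro d' ⟨⟨hiso, hdet'⟩, hhp', hray'⟩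
  have hnorm : ∀ z : V, ‖d' z‖ = ‖z‖ := by
    intro z
    have h2 := hiso z z
    rw [real_inner_self_eq_norm_mul_norm, real_inner_self_eq_norm_mul_norm] at h2
    rcases mul_self_eq_mul_self_iff.mp h2 with h3 | h3
    · exact h3
    · have h4 := norm_nonneg (d' z)
      have h5 := norm_nonneg z
      linarith
  have hvne : v ≠ 0 := by have := h.ne_zero 0; simpa using this
  obtain ⟨t, ht0, htv⟩ : d' v ∈ Ray' v' := by
    rw [← hray']
    exact ⟨v, ⟨1, zero_le_one, (one_smul ℝ v).symm⟩, rfl⟩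
  have htpos : 0 < t := by
    rcases ht0.lt_or_eq with h4 | h4
    · exact h4
    · exfalso
      apply hvne
      have h5 : d' v = 0 := by rw [htv, ← h4, zero_smul]
      simpa using h5
  -- d' (e 0) = f 0
  have hv'f : v' = c'⁻¹ • f 0 := by
    rw [hf0, smul_smul, inv_mul_cancel₀ hc'.ne', one_smul]
  have hone : d' (e 0) = (c * t * c'⁻¹) • f 0 := by
    rw [he0, map_smul, htv, smul_smul, hv'f, smul_smul]
  have hnorm1 : ‖d' (e 0)‖ = 1 := by rw [hnorm]; exact he.1 0
  have hcoef : c * t * c'⁻¹ = 1 := by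
    rw [hone, norm_smul, hf.1 0, mul_one, Real.norm_eq_abs,
      abs_of_nonneg (by positivity)] at hnorm1
    exact hnorm1
  have hd'e0 : d' (e 0) = f 0 := by rw [hone, hcoef, one_smul]
  -- d' (e 1) = f 1
  have hw'f : w' = (-(s'⁻¹ * a' * c'⁻¹)) • f 0 + s'⁻¹ • f 1 := by
    have h5 : w' = s'⁻¹ • f 1 - (s'⁻¹ * a') • v' := by
      rw [hf1]
      match_scalars <;> field_simp <;> ring
    rw [h5, hv'f]
    module
  obtain ⟨p, q, hq0, hpq⟩ : d' (e 1) ∈ HalfPlane v' w' := by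
    rw [← hhp']
    exact ⟨e 1, ⟨a, s, hs.le, he1⟩, rfl⟩
  have hrep : d' (e 1) = (p * c'⁻¹ + q * (-(s'⁻¹ * a' * c'⁻¹))) • f 0 + (q * s'⁻¹) • f 1 := by
    rw [hpq, hv'f, hw'f]
    module
  have h6 : ⟪f 0, d' (e 1)⟫_ℝ = p * c'⁻¹ + q * (-(s'⁻¹ * a' * c'⁻¹)) := by
    rw [hrep, inner_add_right, real_inner_smul_right, real_inner_smul_right, F00, F01]
    ring
  have h7 : ⟪f 0, d' (e 1)⟫_ℝ = 0 := by
    rw [← hd'e0, hiso]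
    exact he.2 (by decide)
  have hP0 : p * c'⁻¹ + q * -(s'⁻¹ * a' * c'⁻¹) = 0 := by rw [← h6]; exact h7
  have hrep2 : d' (e 1) = (q * s'⁻¹) • f 1 := by
    rw [hrep, hP0, zero_smul, zero_add]
  have hq1 : q * s'⁻¹ = 1 := by
    have h8 : ‖d' (e 1)‖ = 1 := by rw [hnorm]; exact he.1 1
    rwa [hrep2, norm_smul, hf.1 1, mul_one, Real.norm_eq_abs,
      abs_of_nonneg (mul_nonneg hq0 (by positivity))] at h8
  have hd'e1 : d' (e 1) = f 1 := by rw [hrep2, hq1, one_smul]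
  -- d' (e 2) = γ • f 2
  set z : V := d' (e 2) with hzdef
  have hz0 : ⟪f 0, z⟫_ℝ = 0 := by
    rw [hzdef, ← hd'e0, hiso]
    exact he.2 (by decide)
  have hz1 : ⟪f 1, z⟫_ℝ = 0 := by
    rw [hzdef, ← hd'e1, hiso]
    exact he.2 (by decide)
  have hzexp : (Bf.repr z 0) • f 0 + (Bf.repr z 1) • f 1 + (Bf.repr z 2) • f 2 = z := by
    have h10 := Bf.sum_repr z
    rw [Fin.sum_univ_three] at h10
    conv_rhs => rw [← h10]
    rw [hBf]
  have hα : Bf.repr z 0 = 0 := by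
    have h9 : ⟪f 0, z⟫_ℝ = Bf.repr z 0 := by
      conv_lhs => rw [← hzexp]
      rw [inner_add_right, inner_add_right, real_inner_smul_right, real_inner_smul_right,
        real_inner_smul_right, F00, F01, F02]
      ring
    rw [← h9, hz0]
  have hβ : Bf.repr z 1 = 0 := by
    have h9 : ⟪f 1, z⟫_ℝ = Bf.repr z 1 := by
      conv_lhs => rw [← hzexp]
      rw [inner_add_right, inner_add_right, real_inner_smul_right, real_inner_smul_right,
        real_inner_smul_right, F10, F11, F12]
      ring
    rw [← h9, hz1]
  set γ : ℝ := Bf.repr z 2 with hγdef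
  have hzf : z = γ • f 2 := by
    conv_lhs => rw [← hzexp]
    rw [hα, hβ, zero_smul, zero_smul, zero_add, zero_add]
  have hdB' : ∀ i, ((d' : V →ₗ[ℝ] V) (B i)) = (![f 0, f 1, γ • f 2]) i := by
    intro i
    rw [show (B i) = e i from by rw [hB]]
    fin_cases i
    · simpa using hd'e0
    · simpa using hd'e1
    · simpa using hzf
  have h11 : (1:ℝ) = γ * δ := by
    rw [← hdet', det_eq_basis_det B _ _ hdB', det_scale3, ← hδdef]
  have hγδ : γ = δ := by
    rcases hδ with h12 | h12 <;> rw [h12] at h11 <;> linarith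
  apply LinearEquiv.toLinearMap_injective
  apply Basis.ext B
  intro i
  rw [hdB' i, hdB i, hf'def, hγδ]

end Key

theorem stmt14 {V : Type*} [AddCommGroup V] [Module ℝ V]
    (hdim : Module.finrank ℝ V = 3)
    (b : V →ₗ[ℝ] V →ₗ[ℝ] ℝ)
    (hsymm : ∀ x y : V, b x y = b y x)
    (hpos : ∀ x : V, x ≠ 0 → 0 < b x x) :
    ∀ v w v' w' : V, LinearIndependent ℝ ![v, w] → LinearIndependent ℝ ![v', w'] →
      ∃! d : V ≃ₗ[ℝ] V,
        ((∀ x y : V, b (d x) (d y) = b x y) ∧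
          LinearMap.det (d : V →ₗ[ℝ] V) = 1) ∧
        (d : V ≃ₗ[ℝ] V) '' HalfPlane v w = HalfPlane v' w' ∧
        (d : V ≃ₗ[ℝ] V) '' Ray' v = Ray' v' := by
  let core : InnerProductSpace.Core ℝ V :=
    { inner := fun x y => b x y
      conj_inner_symm := fun x y => by simpa using hsymm y x
      re_inner_nonneg := fun x => by
        rcases eq_or_ne x 0 with rfl | hx
        · simp
        · simpa using (hpos x hx).le
      definite := fun x hx => by
        by_contra h
        exact absurd hx (ne_of_gt (hpos x h))
      add_left := fun x y z => by simp [map_add]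
      smul_left := fun x y r => by simp }
  letI : NormedAddCommGroup V := core.toNormedAddCommGroup
  letI : InnerProductSpace ℝ V := InnerProductSpace.ofCore core.toCore
  exact fun v w v' w' hvw hv'w' => key hdim v w v' w' hvw hv'w'
end
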